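/- Let f : [0,T]×Σ×U×A×S → ℤ be given by f(t,x,u,a,p) = Σ_{y∈Σ}(y−x)·1_{(0,λ(t,x,y,a,p))}(u_y) and ν the sum of one-dimensional Lebesgue measures on the coordinate segments U_y. If the rate λ is Lipschitz in (a,p) with constant K_λ, i.e. Σ_{y≠x} |λ(t,x,y,a,p) − λ(t,x,y,b,q)| ≤ K_λ (dist(a,b) + |p−q|) for all t,x, then ∫_U |f(t,x,u,a,p) − f(t,x,u,b,q)| ν(du) ≤ 2d · K_λ · (dist(a,b) + |p−q|) for all t ∈ [0,T], x ∈ Σ, a,b ∈ A, p,q ∈ S. -/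

import Mathlib

open MeasureTheory

/-- If the rate `λ` is Lipschitz in `(a,p)` with constant `K_λ` (summed over `y ≠ x`), then the
jump kernel `f(t,x,u,a,p) = ∑_y (y−x) 1_{(0,λ(t,x,y,a,p))}(u_y)` satisfies
`∫_U |f(t,x,u,a,p) − f(t,x,u,b,q)| ν(du) ≤ 2d K_λ (dist(a,b) + |p−q|)`. -/
theorem stmt_6 (d : ℕ) (M T Klam : ℝ) (hM : 0 ≤ M) (hK : 0 ≤ Klam)
    {A : Type*} [MetricSpace A] [CompactSpace A]
    (lam : ℝ → Fin d → Fin d → A → (Fin d → ℝ) → ℝ)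
    (hlam : ∀ t x y a p, lam t x y a p ∈ Set.Icc 0 M)
    (hlip : ∀ t ∈ Set.Icc (0:ℝ) T, ∀ (x : Fin d) (a b : A),
      ∀ p ∈ stdSimplex ℝ (Fin d), ∀ q ∈ stdSimplex ℝ (Fin d),
      ∑ y ∈ Finset.univ.erase x, |lam t x y a p - lam t x y b q| ≤
        Klam * (dist a b + Real.sqrt (∑ j, (p j - q j)^2)))
    (ν : Measure (Fin d → ℝ))
    (hν : ν = ∑ y : Fin d,
      Measure.map (fun r : ℝ => fun j => if j = y then r else 0)
        (volume.restrict (Set.Icc (0:ℝ) M)))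
    (f : ℝ → Fin d → (Fin d → ℝ) → A → (Fin d → ℝ) → ℝ)
    (hf : ∀ t x u a p, f t x u a p =
      ∑ y : Fin d, (((y:ℕ):ℝ) + 1 - (((x:ℕ):ℝ) + 1)) *
        Set.indicator (Set.Ioo (0:ℝ) (lam t x y a p)) (fun _ => (1:ℝ)) (u y)) :
    ∀ t ∈ Set.Icc (0:ℝ) T, ∀ (x : Fin d) (a b : A),
      ∀ p ∈ stdSimplex ℝ (Fin d), ∀ q ∈ stdSimplex ℝ (Fin d),
      ∫ u, |f t x u a p - f t x u b q| ∂ν ≤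
        2 * d * Klam * (dist a b + Real.sqrt (∑ j, (p j - q j)^2)) := by
  intro t ht x a b p hp q hq
  subst hν
  set D := dist a b + Real.sqrt (∑ j, (p j - q j)^2) with hD
  have hD0 : 0 ≤ D := add_nonneg dist_nonneg (Real.sqrt_nonneg _)
  set μ0 := volume.restrict (Set.Icc (0:ℝ) M) with hμ0
  have hfin : IsFiniteMeasure μ0 := by
    constructor
    rw [hμ0, Measure.restrict_apply_univ]
    exact measure_Icc_lt_top
  -- integrability of indicators
  have hindInt : ∀ c : ℝ, Integrable (Set.indicator (Set.Ioo (0:ℝ) c) (fun _ => (1:ℝ))) μ0 :=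
    fun c => (integrable_const 1).indicator measurableSet_Ioo
  -- values of indicator integrals
  have hindVal : ∀ c : ℝ, 0 ≤ c → c ≤ M →
      ∫ r, Set.indicator (Set.Ioo (0:ℝ) c) (fun _ => (1:ℝ)) r ∂μ0 = c := by
    intro c hc hcM
    rw [hμ0, MeasureTheory.integral_indicator measurableSet_Ioo,
        Measure.restrict_restrict measurableSet_Ioo,
        Set.inter_eq_self_of_subset_left (Set.Ioo_subset_Icc_self.trans (Set.Icc_subset_Icc_right hcM)),
        setIntegral_const]
    simp [Real.volume_Ioo, ENNReal.toReal_ofReal hc]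
    exact hc
  -- the key 1-d computation, ordered version
  have base : ∀ c1 c2 : ℝ, 0 ≤ c1 → c1 ≤ c2 → c2 ≤ M →
      ∫ r, |Set.indicator (Set.Ioo (0:ℝ) c1) (fun _ => (1:ℝ)) r
            - Set.indicator (Set.Ioo (0:ℝ) c2) (fun _ => (1:ℝ)) r| ∂μ0 = c2 - c1 := by
    intro c1 c2 h0 h12 h2M
    have hle : ∀ r, Set.indicator (Set.Ioo (0:ℝ) c1) (fun _ => (1:ℝ)) r ≤
        Set.indicator (Set.Ioo (0:ℝ) c2) (fun _ => (1:ℝ)) r := by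
      intro r
      exact Set.indicator_le_indicator_of_subset (Set.Ioo_subset_Ioo_right h12)
        (fun _ => by norm_num) r
    have heq : ∀ r, |Set.indicator (Set.Ioo (0:ℝ) c1) (fun _ => (1:ℝ)) r
            - Set.indicator (Set.Ioo (0:ℝ) c2) (fun _ => (1:ℝ)) r|
          = Set.indicator (Set.Ioo (0:ℝ) c2) (fun _ => (1:ℝ)) r
            - Set.indicator (Set.Ioo (0:ℝ) c1) (fun _ => (1:ℝ)) r := by
      intro r
      rw [abs_sub_comm, abs_of_nonneg (sub_nonneg.2 (hle r))]
    simp_rw [heq]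
    rw [integral_sub (hindInt c2) (hindInt c1), hindVal c2 (h0.trans h12) h2M,
        hindVal c1 h0 (h12.trans h2M)]
  -- general version
  have base' : ∀ c1 c2 : ℝ, c1 ∈ Set.Icc (0:ℝ) M → c2 ∈ Set.Icc (0:ℝ) M →
      ∫ r, |Set.indicator (Set.Ioo (0:ℝ) c1) (fun _ => (1:ℝ)) r
            - Set.indicator (Set.Ioo (0:ℝ) c2) (fun _ => (1:ℝ)) r| ∂μ0 = |c1 - c2| := by
    intro c1 c2 h1 h2
    rcases le_total c1 c2 with h | h
    · rw [base c1 c2 h1.1 h h2.2, abs_sub_comm, abs_of_nonneg (sub_nonneg.2 h)]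
    · calc ∫ r, |Set.indicator (Set.Ioo (0:ℝ) c1) (fun _ => (1:ℝ)) r
            - Set.indicator (Set.Ioo (0:ℝ) c2) (fun _ => (1:ℝ)) r| ∂μ0
          = ∫ r, |Set.indicator (Set.Ioo (0:ℝ) c2) (fun _ => (1:ℝ)) r
            - Set.indicator (Set.Ioo (0:ℝ) c1) (fun _ => (1:ℝ)) r| ∂μ0 := by
            congr 1; funext r; exact abs_sub_comm _ _
        _ = c1 - c2 := base c2 c1 h2.1 h h1.2
        _ = |c1 - c2| := (abs_of_nonneg (sub_nonneg.2 h)).symm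
  -- composition with the coordinate embedding
  have hcomp : ∀ (y : Fin d) (r : ℝ) (a : A) (p : Fin d → ℝ),
      f t x (fun j => if j = y then r else 0) a p =
        (((y:ℕ):ℝ) + 1 - (((x:ℕ):ℝ) + 1)) *
          Set.indicator (Set.Ioo (0:ℝ) (lam t x y a p)) (fun _ => (1:ℝ)) r := by
    intro y r a p
    rw [hf, Finset.sum_eq_single y]
    · simp
    · intro y' _ hy'
      have h0 : (0:ℝ) ∉ Set.Ioo (0:ℝ) (lam t x y' a p) := fun h => lt_irrefl 0 h.1
      rw [if_neg hy', Set.indicator_of_notMem h0, mul_zero]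
    · simp
  -- measurability
  have hmeasf : ∀ (a : A) (p : Fin d → ℝ), Measurable fun u : Fin d → ℝ => f t x u a p := by
    intro a p
    simp only [hf]
    apply Finset.measurable_sum
    intro y _
    exact ((measurable_const.indicator measurableSet_Ioo).comp (measurable_pi_apply y)).const_mul _
  have hmeasg : Measurable fun u : Fin d → ℝ => |f t x u a p - f t x u b q| :=
    ((hmeasf a p).sub (hmeasf b q)).abs
  have hme : ∀ y : Fin d, Measurable fun r : ℝ => (fun j => if j = y then r else 0 : Fin d → ℝ) := by
    intro y
    apply measurable_pi_lambda
    intro j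
    by_cases h : j = y
    · simp only [if_pos h]; exact measurable_id
    · simp only [if_neg h]; exact measurable_const
  -- the value of each coordinate integral
  have hintegral : ∀ y : Fin d,
      ∫ r, |f t x (fun j => if j = y then r else 0) a p
            - f t x (fun j => if j = y then r else 0) b q| ∂μ0
        = |((y:ℕ):ℝ) + 1 - (((x:ℕ):ℝ) + 1)| * |lam t x y a p - lam t x y b q| := by
    intro y
    simp_rw [hcomp, ← mul_sub, abs_mul]
    rw [integral_const_mul, base' _ _ (hlam t x y a p) (hlam t x y b q)]
  have hIntComp : ∀ y : Fin d,
      Integrable (fun r => |f t x (fun j => if j = y then r else 0) a p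
            - f t x (fun j => if j = y then r else 0) b q|) μ0 := by
    intro y
    simp_rw [hcomp, ← mul_sub, abs_mul]
    exact (((hindInt _).sub (hindInt _)).abs).const_mul _
  have hIntAll : ∀ y ∈ Finset.univ, Integrable (fun u => |f t x u a p - f t x u b q|)
      (Measure.map (fun r : ℝ => fun j => if j = y then r else 0) μ0) := by
    intro y _
    rw [integrable_map_measure hmeasg.aestronglyMeasurable (hme y).aemeasurable]
    exact hIntComp y
  rw [integral_finset_sum_measure hIntAll]
  have hvals : ∀ y ∈ Finset.univ,
      ∫ u, |f t x u a p - f t x u b q|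
        ∂(Measure.map (fun r : ℝ => fun j => if j = y then r else 0) μ0)
      = |((y:ℕ):ℝ) + 1 - (((x:ℕ):ℝ) + 1)| * |lam t x y a p - lam t x y b q| := by
    intro y _
    rw [integral_map (hme y).aemeasurable hmeasg.aestronglyMeasurable]
    exact hintegral y
  rw [Finset.sum_congr rfl hvals]
  -- bound the coefficients
  have hCbound : ∀ y : Fin d, |((y:ℕ):ℝ) + 1 - (((x:ℕ):ℝ) + 1)| ≤ 2 * d := by
    intro y
    have h1 : ((y:ℕ):ℝ) < d := by exact_mod_cast y.isLt
    have h2 : ((x:ℕ):ℝ) < d := by exact_mod_cast x.isLt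
    have hy0 : (0:ℝ) ≤ ((y:ℕ):ℝ) := Nat.cast_nonneg _
    have hx0 : (0:ℝ) ≤ ((x:ℕ):ℝ) := Nat.cast_nonneg _
    rw [abs_le]
    constructor <;> linarith
  calc ∑ y : Fin d, |((y:ℕ):ℝ) + 1 - (((x:ℕ):ℝ) + 1)| * |lam t x y a p - lam t x y b q|
      = ∑ y ∈ Finset.univ.erase x,
          |((y:ℕ):ℝ) + 1 - (((x:ℕ):ℝ) + 1)| * |lam t x y a p - lam t x y b q| :=
        (Finset.sum_erase _ (by simp)).symm
    _ ≤ ∑ y ∈ Finset.univ.erase x, (2 * d) * |lam t x y a p - lam t x y b q| :=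
        Finset.sum_le_sum (fun y _ => mul_le_mul_of_nonneg_right (hCbound y) (abs_nonneg _))
    _ = 2 * d * ∑ y ∈ Finset.univ.erase x, |lam t x y a p - lam t x y b q| :=
        (Finset.mul_sum _ _ _).symm
    _ ≤ 2 * d * (Klam * D) := by
        apply mul_le_mul_of_nonneg_left (hlip t ht x a b p hp q hq)
        positivity
    _ = 2 * d * Klam * D := by ring
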